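/- Let n ≥ 2 and let G be a transitive subgroup of the symmetric group S_n on {1, …, n}. If G contains a transposition and a cycle of length p for some prime p with p > n/2, then G = S_n. -/

import Mathlib

open Equiv Equiv.Perm MulAction Subgroup

theorem stmt_6 (n : ℕ) (hn : 2 ≤ n) (p : ℕ) (hp : p.Prime) (hpn : n < 2 * p)
    (G : Subgroup (Equiv.Perm (Fin n)))
    (htrans : ∀ i j : Fin n, ∃ σ ∈ G, σ i = j)
    (hswap : ∃ τ ∈ G, τ.IsSwap)
    (hcycle : ∃ σ ∈ G, σ.IsCycle ∧ σ.support.card = p) :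
    G = ⊤ := by
  classical
  obtain ⟨τ, hτG, a, b, hab, rfl⟩ := hswap
  obtain ⟨σc, hσG, hσcyc, hσcard⟩ := hcycle
  set S : Set (Perm (Fin n)) := {f | f.IsSwap ∧ f ∈ G} with hSdef
  set H : Subgroup (Perm (Fin n)) := Subgroup.closure S with hHdef
  have hSswap : ∀ f ∈ S, f.IsSwap := fun f hf => hf.1
  have hHG : H ≤ G := (Subgroup.closure_le G).mpr (fun f hf => hf.2)
  -- conjugation by elements of G preserves H
  have hconj : ∀ g ∈ G, ∀ h ∈ H, g * h * g⁻¹ ∈ H := by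
    intro g hg h hh
    refine Subgroup.closure_induction ?_ ?_ ?_ ?_ hh
    · rintro t ⟨⟨u, v, huv, rfl⟩, htG⟩
      apply Subgroup.subset_closure
      rw [← Equiv.swap_apply_apply]
      exact ⟨⟨g u, g v, fun h => huv (g.injective h), rfl⟩,
        by rw [Equiv.swap_apply_apply]; exact G.mul_mem (G.mul_mem hg htG) (G.inv_mem hg)⟩
    · simpa using H.one_mem
    · intro x y _ _ hx' hy'
      have := H.mul_mem hx' hy'
      convert this using 1
      group
    · intro x _ hx'
      have := H.inv_mem hx'
      convert this using 1
      group
  -- orbit invariance under G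
  have hinv : ∀ g ∈ G, ∀ y z : Fin n, z ∈ MulAction.orbit H y →
      g z ∈ MulAction.orbit H (g y) := by
    rintro g hg y z ⟨h, rfl⟩
    refine ⟨⟨g * (h : Perm (Fin n)) * g⁻¹, hconj g hg _ h.2⟩, ?_⟩
    simp [Subgroup.smul_def, Perm.smul_def, Perm.mul_apply]
  have hord : orderOf σc = p := hσcyc.orderOf.trans hσcard
  -- every point has another point in its orbit
  have hpair : ∀ y : Fin n, ∃ c, c ∈ MulAction.orbit H y ∧ c ≠ y := by
    intro y
    obtain ⟨g, hgG, hga⟩ := htrans a y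
    have hbH : b ∈ MulAction.orbit H a := by
      refine ⟨⟨Equiv.swap a b, Subgroup.subset_closure ⟨⟨a, b, hab, rfl⟩, hτG⟩⟩, ?_⟩
      simp [Perm.smul_def]
    have := hinv g hgG a b hbH
    rw [hga] at this
    exact ⟨g b, this, fun h => hab (g.injective (h.trans hga.symm)).symm⟩
  -- key step: σc fixes every orbit
  have hfix : ∀ x : Fin n, σc x ∈ MulAction.orbit H x := by
    by_contra hcon
    push_neg at hcon
    obtain ⟨x, hx⟩ := hcon
    -- the orbits of σc^i x for i < p are pairwise distinct
    have hdist : ∀ i j : ℕ, i < j → j < p →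
        MulAction.orbit H ((σc ^ i) x) ≠ MulAction.orbit H ((σc ^ j) x) := by
      intro i j hij hjp heq
      apply hx
      have hmem : (σc ^ j) x ∈ MulAction.orbit H ((σc ^ i) x) := by
        rw [heq]; exact MulAction.mem_orbit_self _
      have hGi : (σc ^ i)⁻¹ ∈ G := G.inv_mem (G.pow_mem hσG i)
      have hstep := hinv _ hGi _ _ hmem
      simp only [show (σc ^ i)⁻¹ ((σc ^ i) x) = x from (σc ^ i).symm_apply_apply x] at hstep
      have hpowsplit : (σc ^ i)⁻¹ ((σc ^ j) x) = (σc ^ (j - i)) x := by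
        have : σc ^ j = σc ^ i * σc ^ (j - i) := by
          rw [← pow_add, Nat.add_sub_cancel' hij.le]
        rw [this]
        simp [Perm.mul_apply]
      rw [hpowsplit] at hstep
      set t := j - i with htdef
      have ht0 : 0 < t := Nat.sub_pos_of_lt hij
      have htp : t < p := lt_of_le_of_lt (Nat.sub_le _ _) hjp
      have hmul : ∀ m : ℕ, (σc ^ (m * t)) x ∈ MulAction.orbit H x := by
        intro m
        induction m with
        | zero => simpa using MulAction.mem_orbit_self x
        | succ m ih =>
          have hGt : σc ^ t ∈ G := G.pow_mem hσG t
          have := hinv _ hGt _ _ ih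
          rw [MulAction.orbit_eq_iff.mpr hstep] at this
          have heq2 : (σc ^ t) ((σc ^ (m * t)) x) = (σc ^ ((m + 1) * t)) x := by
            rw [← Perm.mul_apply, ← pow_add]
            ring_nf
          rwa [heq2] at this
      have hcop : Nat.Coprime t p := ((hp.coprime_iff_not_dvd).mpr
        (Nat.not_dvd_of_pos_of_lt ht0 htp)).symm
      obtain ⟨m, -, hm⟩ := Nat.exists_mul_mod_eq_one_of_coprime hcop hp.one_lt
      have := hmul m
      have hσ1 : (σc ^ (m * t)) x = σc x := by
        rw [← pow_mod_orderOf, hord, mul_comm m t, hm, pow_one]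
      rwa [hσ1] at this
    -- build 2p distinct points, contradiction
    choose bf hbf1 hbf2 using fun k : Fin p => hpair ((σc ^ (k : ℕ)) x)
    set φ : Fin p × Bool → Fin n :=
      fun u => if u.2 then bf u.1 else (σc ^ (u.1 : ℕ)) x with hφdef
    have hφorb : ∀ u : Fin p × Bool, φ u ∈ MulAction.orbit H ((σc ^ (u.1 : ℕ)) x) := by
      rintro ⟨k, s⟩
      cases s
      · simpa [hφdef] using MulAction.mem_orbit_self _
      · simpa [hφdef] using hbf1 k
    have hφinj : Function.Injective φ := by
      rintro ⟨k, s⟩ ⟨k', s'⟩ h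
      have hkk : k = k' := by
        by_contra hne
        have horbeq : MulAction.orbit H ((σc ^ (k : ℕ)) x) =
            MulAction.orbit H ((σc ^ (k' : ℕ)) x) := by
          rw [← MulAction.orbit_eq_iff.mpr (hφorb ⟨k, s⟩), h,
            MulAction.orbit_eq_iff.mpr (hφorb ⟨k', s'⟩)]
        rcases lt_or_gt_of_ne (fun hc : (k : ℕ) = (k' : ℕ) => hne (Fin.ext hc)) with hlt | hlt
        · exact hdist _ _ hlt k'.2 horbeq
        · exact hdist _ _ hlt k.2 horbeq.symm
      subst hkk
      cases s <;> cases s'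
      · rfl
      · exact absurd (by simpa [hφdef] using h.symm) (hbf2 k)
      · exact absurd (by simpa [hφdef] using h) (hbf2 k)
      · rfl
    have hcard : 2 * p ≤ n := by
      have := Fintype.card_le_of_injective φ hφinj
      simpa [mul_comm] using this
    omega
  -- the support of σc lies in a single orbit
  have hsupp_ne : σc.support.Nonempty := by
    rw [← Finset.card_pos, hσcard]; exact hp.pos
  obtain ⟨x, hxsupp⟩ := hsupp_ne
  have hpow : ∀ m : ℕ, (σc ^ m) x ∈ MulAction.orbit H x := by
    intro m
    induction m with
    | zero => simpa using MulAction.mem_orbit_self x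
    | succ m ih =>
      have := hinv σc hσG _ _ ih
      rw [MulAction.orbit_eq_iff.mpr (hfix x)] at this
      rwa [← Perm.mul_apply, ← pow_succ'] at this
  have hsupp_sub : (σc.support : Set (Fin n)) ⊆ MulAction.orbit H x := by
    intro y hy
    have hy' : σc y ≠ y := Perm.mem_support.mp hy
    have hx' : σc x ≠ x := Perm.mem_support.mp hxsupp
    obtain ⟨m, hm⟩ := hσcyc.exists_pow_eq hx' hy'
    exact hm ▸ hpow m
  -- every orbit has at least p elements
  have horb : ∀ y : Fin n, p ≤ (MulAction.orbit H y).ncard := by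
    intro y
    obtain ⟨g, hgG, hgx⟩ := htrans x y
    have himg : (fun z => g z) '' (σc.support : Set (Fin n)) ⊆ MulAction.orbit H y := by
      rintro _ ⟨z, hz, rfl⟩
      have := hinv g hgG x z (hsupp_sub hz)
      rwa [hgx] at this
    calc p = (σc.support : Set (Fin n)).ncard := by
            rw [Set.ncard_coe_finset, hσcard]
      _ = ((fun z => g z) '' (σc.support : Set (Fin n))).ncard :=
            (Set.ncard_image_of_injective _ g.injective).symm
      _ ≤ (MulAction.orbit H y).ncard := Set.ncard_le_ncard himg (Set.toFinite _)
  -- therefore there is a single orbit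
  have hone : ∀ y : Fin n, y ∈ MulAction.orbit H x := by
    intro y
    by_contra hy
    have hdisj : Disjoint (MulAction.orbit H x) (MulAction.orbit H y) := by
      rw [Set.disjoint_left]
      intro z hzx hzy
      apply hy
      rw [← MulAction.orbit_eq_iff.mpr hzx, MulAction.orbit_eq_iff.mpr hzy]
      exact MulAction.mem_orbit_self y
    have hle : 2 * p ≤ n := by
      calc 2 * p = p + p := by ring
        _ ≤ (MulAction.orbit H x).ncard + (MulAction.orbit H y).ncard :=
            add_le_add (horb x) (horb y)
        _ = (MulAction.orbit H x ∪ MulAction.orbit H y).ncard :=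
            (Set.ncard_union_eq hdisj (Set.toFinite _) (Set.toFinite _)).symm
        _ ≤ (Set.univ : Set (Fin n)).ncard :=
            Set.ncard_le_ncard (Set.subset_univ _) (Set.toFinite _)
        _ = n := by simp [Set.ncard_univ]
    omega
  have hHtop : H = ⊤ := by
    rw [Subgroup.eq_top_iff']
    intro f
    rw [hHdef, mem_closure_isSwap hSswap]
    refine ⟨Set.toFinite _, fun z => ?_⟩
    have h1 := hone z
    have h2 := hone (f z)
    rwa [← MulAction.orbit_eq_iff.mpr h1] at h2
  exact le_antisymm le_top (hHtop ▸ hHG)
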